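/- The algebraic connectivity λ₂(L(w)) of a weighted graph Laplacian is a monotonically nondecreasing concave function of the edge-weight vector w on the nonnegative orthant: if 0 ≤ w ≤ w' entrywise then λ₂(L(w)) ≤ λ₂(L(w')), and λ₂(L(·)) is concave in w. -/
import Mathlib


open Matrix Finset

/-- The second-smallest eigenvalue (algebraic connectivity / Fiedler value). -/
noncomputable def lambda2 {V : Type*} [Fintype V] (L : Matrix V V ℝ) : ℝ :=
  sInf {r : ℝ | ∃ x : V → ℝ, (∑ i, x i ^ 2) = 1 ∧ (∑ i, x i) = 0 ∧
    r = x ⬝ᵥ L.mulVec x}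

/-- The weighted Laplacian `L(w) = Σ_l w_l a_l a_lᵀ` built from edge incidence
vectors `a_l` and edge weights `w`. -/
noncomputable def lapOfWeights {n E : ℕ} (a : Fin E → Fin n → ℝ) (w : Fin E → ℝ) :
    Matrix (Fin n) (Fin n) ℝ :=
  ∑ l, w l • Matrix.vecMulVec (a l) (a l)

/-- `a` is the incidence vector of an edge: one entry `+1`, one entry `-1`, rest `0`. -/
def IsIncidenceVector {V : Type*} (a : V → ℝ) : Prop :=
  ∃ i j, i ≠ j ∧ a i = 1 ∧ a j = -1 ∧ ∀ k, k ≠ i → k ≠ j → a k = 0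

lemma quad_eq {n E : ℕ} (a : Fin E → Fin n → ℝ) (w : Fin E → ℝ) (x : Fin n → ℝ) :
    x ⬝ᵥ (lapOfWeights a w).mulVec x = ∑ l, w l * (a l ⬝ᵥ x)^2 := by
  have key : ∀ (F : Fin n → Fin n → Fin E → ℝ),
      ∑ i, ∑ j, ∑ l, F i j l = ∑ l, ∑ i, ∑ j, F i j l := by
    intro F
    have h1 : ∀ i, ∑ j, ∑ l, F i j l = ∑ l, ∑ j, F i j l := fun i => Finset.sum_comm
    simp_rw [h1]
    exact Finset.sum_comm
  simp only [lapOfWeights, dotProduct, mulVec, Matrix.sum_apply, Matrix.smul_apply,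
    vecMulVec_apply, smul_eq_mul, Finset.sum_mul, Finset.mul_sum, pow_two]
  rw [key]
  refine Finset.sum_congr rfl fun l _ => Finset.sum_congr rfl fun i _ =>
    Finset.sum_congr rfl fun j _ => ?_
  ring

/-- The feasible set for `lambda2 (lapOfWeights a w)`. -/
def lamSet {n E : ℕ} (a : Fin E → Fin n → ℝ) (w : Fin E → ℝ) : Set ℝ :=
  {r : ℝ | ∃ x : Fin n → ℝ, (∑ i, x i ^ 2) = 1 ∧ (∑ i, x i) = 0 ∧
    r = x ⬝ᵥ (lapOfWeights a w).mulVec x}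

lemma lambda2_eq {n E : ℕ} (a : Fin E → Fin n → ℝ) (w : Fin E → ℝ) :
    lambda2 (lapOfWeights a w) = sInf (lamSet a w) := rfl

lemma mem_lamSet {n E : ℕ} (a : Fin E → Fin n → ℝ) (w : Fin E → ℝ) {x : Fin n → ℝ}
    (h1 : (∑ i, x i ^ 2) = 1) (h2 : (∑ i, x i) = 0) :
    (∑ l, w l * (a l ⬝ᵥ x)^2) ∈ lamSet a w :=
  ⟨x, h1, h2, (quad_eq a w x).symm⟩

lemma lamSet_bddBelow {n E : ℕ} (a : Fin E → Fin n → ℝ) {w : Fin E → ℝ}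
    (hw : ∀ l, 0 ≤ w l) : BddBelow (lamSet a w) := by
  refine ⟨0, fun r hr => ?_⟩
  obtain ⟨x, _, _, rfl⟩ := hr
  rw [quad_eq]
  exact Finset.sum_nonneg fun l _ => mul_nonneg (hw l) (sq_nonneg _)

lemma lamSet_empty_iff {n E : ℕ} (a : Fin E → Fin n → ℝ) (w w' : Fin E → ℝ) :
    (lamSet a w).Nonempty → (lamSet a w').Nonempty := by
  rintro ⟨r, x, h1, h2, -⟩
  exact ⟨_, x, h1, h2, rfl⟩

/-- The algebraic connectivity `λ₂(L(w))` is a monotonically nondecreasing and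
concave function of the edge-weight vector `w` on the nonnegative orthant. -/
theorem lambda2_monotone_concave {n E : ℕ}
    (a : Fin E → Fin n → ℝ) (ha : ∀ l, IsIncidenceVector (a l)) :
    (∀ w w' : Fin E → ℝ, (∀ l, 0 ≤ w l) → (∀ l, w l ≤ w' l) →
      lambda2 (lapOfWeights a w) ≤ lambda2 (lapOfWeights a w')) ∧
    ConcaveOn ℝ {w : Fin E → ℝ | ∀ l, 0 ≤ w l}
      (fun w => lambda2 (lapOfWeights a w)) := by
  constructor
  · intro w w' hw hww'
    rw [lambda2_eq, lambda2_eq]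
    by_cases hne : (lamSet a w').Nonempty
    · refine le_csInf hne ?_
      rintro r ⟨x, h1, h2, rfl⟩
      rw [quad_eq]
      refine le_trans (csInf_le (lamSet_bddBelow a hw) (mem_lamSet a w h1 h2)) ?_
      exact Finset.sum_le_sum fun l _ => mul_le_mul_of_nonneg_right (hww' l) (sq_nonneg _)
    · have hne' : ¬ (lamSet a w).Nonempty := fun h => hne (lamSet_empty_iff a w w' h)
      rw [Set.not_nonempty_iff_eq_empty] at hne hne'
      rw [hne, hne']
  · constructor
    · intro w hw w' hw' s t hs ht hst
      intro l
      exact add_nonneg (mul_nonneg hs (hw l)) (mul_nonneg ht (hw' l))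
    · intro w hw w' hw' s t hs ht hst
      simp only [smul_eq_mul]
      rw [lambda2_eq, lambda2_eq, lambda2_eq]
      by_cases hne : (lamSet a w).Nonempty
      · refine le_csInf (lamSet_empty_iff a w _ hne) ?_
        rintro r ⟨x, h1, h2, rfl⟩
        rw [quad_eq]
        have e1 : lambda2 (lapOfWeights a w) ≤ ∑ l, w l * (a l ⬝ᵥ x)^2 :=
          csInf_le (lamSet_bddBelow a hw) (mem_lamSet a w h1 h2)
        have e2 : lambda2 (lapOfWeights a w') ≤ ∑ l, w' l * (a l ⬝ᵥ x)^2 :=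
          csInf_le (lamSet_bddBelow a hw') (mem_lamSet a w' h1 h2)
        have lin : ∑ l, (s • w + t • w') l * (a l ⬝ᵥ x)^2
            = s * (∑ l, w l * (a l ⬝ᵥ x)^2) + t * (∑ l, w' l * (a l ⬝ᵥ x)^2) := by
          simp only [Pi.add_apply, Pi.smul_apply, smul_eq_mul, Finset.mul_sum]
          rw [← Finset.sum_add_distrib]
          exact Finset.sum_congr rfl fun l _ => by ring
        rw [lin]
        exact add_le_add (mul_le_mul_of_nonneg_left e1 hs) (mul_le_mul_of_nonneg_left e2 ht)
      · have h2 : ¬ (lamSet a w').Nonempty := fun h => hne (lamSet_empty_iff a w' w h)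
        have h3 : ¬ (lamSet a (s • w + t • w')).Nonempty :=
          fun h => hne (lamSet_empty_iff a _ w h)
        rw [Set.not_nonempty_iff_eq_empty] at hne h2 h3
        rw [hne, h2, h3]
        simp [Real.sInf_empty]
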